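/- Let n be a positive integer, let A be a complex symmetric n×n matrix with I − AᴴA positive definite, and let S = [[λ, μ], [ν, ρ]] be a complex symplectic 2n×2n matrix (Sᵀ J S = J with J = [[0, I], [−I, 0]]) which maps K-positive vectors to K-positive vectors (vᴴ K v > 0 implies (Sv)ᴴ K (Sv) > 0, with K = [[I, 0], [0, −I]]). Then λ + μA is invertible and the matrix A' = (ρA + ν)(λ + μA)⁻¹ is again complex symmetric with I − A'ᴴA' positive definite. -/

import Mathlib

open Matrix
open scoped ComplexOrder

/-- If `A` is complex symmetric with `I − AᴴA` positive definite and
`S = [[λ, μ], [ν, ρ]]` is complex symplectic mapping `K`-positive vectors to `K`-positive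
vectors, then `λ + μA` is invertible and `A' = (ρA + ν)(λ + μA)⁻¹` is again complex
symmetric with `I − A'ᴴA'` positive definite. -/
theorem semigroup_action_preserves_Dn (n : ℕ) (hn : 0 < n)
    (A lam mu nu rho : Matrix (Fin n) (Fin n) ℂ)
    (hA : Aᵀ = A) (hApd : ((1 : Matrix (Fin n) (Fin n) ℂ) - Aᴴ * A).PosDef)
    (hS : (fromBlocks lam mu nu rho)ᵀ *
        fromBlocks (0 : Matrix (Fin n) (Fin n) ℂ) (1 : Matrix (Fin n) (Fin n) ℂ)
          (-1 : Matrix (Fin n) (Fin n) ℂ) (0 : Matrix (Fin n) (Fin n) ℂ) *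
        fromBlocks lam mu nu rho =
      fromBlocks (0 : Matrix (Fin n) (Fin n) ℂ) (1 : Matrix (Fin n) (Fin n) ℂ)
        (-1 : Matrix (Fin n) (Fin n) ℂ) (0 : Matrix (Fin n) (Fin n) ℂ))
    (hpos : ∀ v : (Fin n ⊕ Fin n) → ℂ,
      0 < star v ⬝ᵥ ((fromBlocks (1 : Matrix (Fin n) (Fin n) ℂ) 0 0
          (-1 : Matrix (Fin n) (Fin n) ℂ)) *ᵥ v) →
      0 < star ((fromBlocks lam mu nu rho) *ᵥ v) ⬝ᵥ
        ((fromBlocks (1 : Matrix (Fin n) (Fin n) ℂ) 0 0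
          (-1 : Matrix (Fin n) (Fin n) ℂ)) *ᵥ ((fromBlocks lam mu nu rho) *ᵥ v))) :
    IsUnit (lam + mu * A) ∧
    ((rho * A + nu) * (lam + mu * A)⁻¹)ᵀ = (rho * A + nu) * (lam + mu * A)⁻¹ ∧
    ((1 : Matrix (Fin n) (Fin n) ℂ) -
      ((rho * A + nu) * (lam + mu * A)⁻¹)ᴴ * ((rho * A + nu) * (lam + mu * A)⁻¹)).PosDef := by
  -- Block identities from symplecticity
  rw [Matrix.fromBlocks_transpose, Matrix.fromBlocks_multiply, Matrix.fromBlocks_multiply,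
    Matrix.fromBlocks_inj] at hS
  obtain ⟨e11, e12, e21, e22⟩ := hS
  simp only [Matrix.mul_zero, Matrix.zero_mul, Matrix.mul_one, Matrix.one_mul, zero_add, add_zero,
    Matrix.mul_neg, Matrix.neg_mul, neg_add_eq_zero] at e11 e12 e21 e22
  -- e11 : nuᵀ * lam = lamᵀ * nu
  -- e12 : -(nuᵀ * mu) + lamᵀ * rho = 1
  -- e21 : -(rhoᵀ * lam) + muᵀ * nu = -1
  -- e22 : rhoᵀ * mu = muᵀ * rho
  have hstar : ∀ (a b : Fin n → ℂ), star (Sum.elim a b) = Sum.elim (star a) (star b) := by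
    intro a b; funext i; cases i <;> rfl
  -- key inequality
  have key : ∀ x : Fin n → ℂ, x ≠ 0 →
      0 < star ((lam + mu * A) *ᵥ x) ⬝ᵥ ((lam + mu * A) *ᵥ x) -
        star ((rho * A + nu) *ᵥ x) ⬝ᵥ ((rho * A + nu) *ᵥ x) := by
    intro x hx
    have hAq : star (A *ᵥ x) ⬝ᵥ (A *ᵥ x) = star x ⬝ᵥ ((Aᴴ * A) *ᵥ x) := by
      rw [star_mulVec, ← Matrix.mulVec_mulVec]
      exact (Matrix.dotProduct_mulVec _ _ _).symm
    have h1 : (0:ℂ) < star (Sum.elim x (A *ᵥ x)) ⬝ᵥ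
        ((fromBlocks (1 : Matrix (Fin n) (Fin n) ℂ) 0 0 (-1)) *ᵥ Sum.elim x (A *ᵥ x)) := by
      have h0 := hApd.dotProduct_mulVec_pos hx
      rw [Matrix.sub_mulVec, Matrix.one_mulVec, dotProduct_sub, hAq.symm] at h0
      rw [Matrix.fromBlocks_mulVec, hstar, sumElim_dotProduct_sumElim]
      simp only [Sum.elim_comp_inl, Sum.elim_comp_inr, Matrix.one_mulVec, Matrix.zero_mulVec,
        add_zero, zero_add, Matrix.neg_mulVec, dotProduct_neg]
      rw [← sub_eq_add_neg]
      exact h0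
    have h2 := hpos _ h1
    rw [Matrix.fromBlocks_mulVec] at h2
    simp only [Sum.elim_comp_inl, Sum.elim_comp_inr] at h2
    rw [Matrix.fromBlocks_mulVec, hstar, sumElim_dotProduct_sumElim] at h2
    simp only [Sum.elim_comp_inl, Sum.elim_comp_inr, Matrix.one_mulVec, Matrix.zero_mulVec,
      add_zero, zero_add, Matrix.neg_mulVec, dotProduct_neg] at h2
    have hu' : lam *ᵥ x + mu *ᵥ (A *ᵥ x) = (lam + mu * A) *ᵥ x := by
      rw [Matrix.add_mulVec, Matrix.mulVec_mulVec]
    have hw' : nu *ᵥ x + rho *ᵥ (A *ᵥ x) = (rho * A + nu) *ᵥ x := by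
      rw [Matrix.add_mulVec, Matrix.mulVec_mulVec, add_comm]
    rw [hu', hw', ← sub_eq_add_neg] at h2
    exact h2
  -- invertibility
  have hU : IsUnit (lam + mu * A) := by
    rw [← Matrix.mulVec_injective_iff_isUnit]
    intro a b hab
    by_contra hne
    have hz : a - b ≠ 0 := sub_ne_zero.mpr hne
    have hk := key (a - b) hz
    have hC0 : (lam + mu * A) *ᵥ (a - b) = 0 := by
      rw [Matrix.mulVec_sub, hab, sub_self]
    rw [hC0] at hk
    simp only [star_zero, zero_dotProduct, zero_sub] at hk
    exact (dotProduct_star_self_nonneg _).not_gt (neg_pos.mp hk)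
  have hUdet : IsUnit (lam + mu * A).det := (Matrix.isUnit_iff_isUnit_det _).mp hU
  have hinv : (lam + mu * A) * (lam + mu * A)⁻¹ = 1 := Matrix.mul_nonsing_inv _ hUdet
  have hinv' : (lam + mu * A)⁻¹ * (lam + mu * A) = 1 := Matrix.nonsing_inv_mul _ hUdet
  -- symmetry
  have symm' : (lam + mu * A)ᵀ * (rho * A + nu) = (rho * A + nu)ᵀ * (lam + mu * A) := by
    rw [Matrix.transpose_add, Matrix.transpose_mul, Matrix.transpose_add, Matrix.transpose_mul, hA]
    have key2 : (lamᵀ + A * muᵀ) * (rho * A + nu) - (A * rhoᵀ + nuᵀ) * (lam + mu * A)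
        = (-(nuᵀ * mu) + lamᵀ * rho - 1) * A + (lamᵀ * nu - nuᵀ * lam)
          + A * (muᵀ * rho - rhoᵀ * mu) * A + A * (-(rhoᵀ * lam) + muᵀ * nu + 1) := by
      noncomm_ring
    rw [e12, e11, e22, e21] at key2
    simp only [sub_self, neg_add_cancel, Matrix.mul_zero, Matrix.zero_mul, add_zero,
      zero_add] at key2
    exact sub_eq_zero.mp key2
  have hsymm : ((rho * A + nu) * (lam + mu * A)⁻¹)ᵀ = (rho * A + nu) * (lam + mu * A)⁻¹ := by
    have h1 : (lam + mu * A)ᵀ * ((rho * A + nu) * (lam + mu * A)⁻¹) = (rho * A + nu)ᵀ := by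
      rw [← Matrix.mul_assoc, symm', Matrix.mul_assoc, hinv, Matrix.mul_one]
    have hUT : IsUnit ((lam + mu * A)ᵀ).det := by
      rwa [Matrix.det_transpose]
    have h2 : (rho * A + nu) * (lam + mu * A)⁻¹ = ((lam + mu * A)ᵀ)⁻¹ * (rho * A + nu)ᵀ := by
      calc (rho * A + nu) * (lam + mu * A)⁻¹
          = ((lam + mu * A)ᵀ)⁻¹ * ((lam + mu * A)ᵀ * ((rho * A + nu) * (lam + mu * A)⁻¹)) := by
            rw [← Matrix.mul_assoc, Matrix.nonsing_inv_mul _ hUT, Matrix.one_mul]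
        _ = ((lam + mu * A)ᵀ)⁻¹ * (rho * A + nu)ᵀ := by rw [h1]
    rw [Matrix.transpose_mul, Matrix.transpose_nonsing_inv]
    exact h2.symm
  refine ⟨hU, hsymm, ?_⟩
  set B := (rho * A + nu) * (lam + mu * A)⁻¹ with hB
  rw [Matrix.posDef_iff_dotProduct_mulVec]
  constructor
  · -- Hermitian
    have := Matrix.isHermitian_mul_conjTranspose_self Bᴴ
    rw [Matrix.conjTranspose_conjTranspose] at this
    exact Matrix.isHermitian_one.sub this
  · intro y hy
    set x := (lam + mu * A)⁻¹ *ᵥ y with hxdef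
    have hCx : (lam + mu * A) *ᵥ x = y := by
      rw [hxdef, Matrix.mulVec_mulVec, hinv, Matrix.one_mulVec]
    have hx : x ≠ 0 := by
      intro h0
      apply hy
      rw [← hCx, h0, Matrix.mulVec_zero]
    have hBy : B *ᵥ y = (rho * A + nu) *ᵥ x := by
      rw [hB, ← Matrix.mulVec_mulVec]
    have hq : star y ⬝ᵥ ((Bᴴ * B) *ᵥ y) = star (B *ᵥ y) ⬝ᵥ (B *ᵥ y) := by
      rw [star_mulVec, ← Matrix.mulVec_mulVec]
      exact Matrix.dotProduct_mulVec _ _ _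
    rw [Matrix.sub_mulVec, Matrix.one_mulVec, dotProduct_sub, hq, hBy, ← hCx]
    exact key x hx
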